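/- Let T > 0 and let x, y : [0,T] → ℝ be càdlàg, where s ↦ x(s−) is a classical simple left-continuous path with times 0 = t₁ < ⋯ < t_{k+1} = T. Let ((u⁽¹⁾,u⁽²⁾), r) ∈ Π((x,y)) be any parametric representation of the ℝ²-valued càdlàg path (x,y). Define z̄ᵢ := sup{ z ∈ [0,1] : r(z) = tᵢ }, z̲ᵢ := inf{ z ∈ [0,1] : r(z) = tᵢ }, and ũ(z) := Σ_{i=1}^{k} u⁽¹⁾(z̲_{i+1}) · ( u⁽²⁾(z ∧ z̄_{i+1}) − u⁽²⁾(z ∧ z̄ᵢ) ) for z ∈ [0,1]. Then ((u⁽¹⁾, u⁽²⁾, ũ), r) is a parametric representation of the ℝ³-valued càdlàg path (x, y, f), i.e. ((u⁽¹⁾,u⁽²⁾,ũ), r) ∈ Π((x, y, f)), where f(t) := ∫₀ᵗ x(s−) dy(s) is the simple integral. -/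

import Mathlib

open Set Filter Topology

/-- Left limit of a path, with the convention `f(0-) = f(0)` (and `f(t-) = f(t)` for `t ≤ 0`). -/
noncomputable def lLim {E : Type*} [TopologicalSpace E] [Nonempty E] (f : ℝ → E) (t : ℝ) : E :=
  if 0 < t then limUnder (𝓝[Iio t] t) f else f t

/-- `f` is càdlàg on `[0,T]`. -/
def CadlagOn {E : Type*} [TopologicalSpace E] [Nonempty E] (f : ℝ → E) (T : ℝ) : Prop :=
  (∀ t ∈ Icc (0:ℝ) T, Tendsto f (𝓝[Icc 0 T ∩ Ici t] t) (𝓝 (f t))) ∧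
  (∀ t ∈ Ioc (0:ℝ) T, Tendsto f (𝓝[Iio t] t) (𝓝 (lLim f t)))

/-- The completed graph `Γ_x` of a càdlàg path `x : [0,T] → ℝ^ι`. -/
def completedGraph {ι : Type*} [Fintype ι] (x : ℝ → EuclideanSpace ℝ ι) (T : ℝ) :
    Set (EuclideanSpace ℝ ι × ℝ) :=
  { p | p.2 ∈ Icc (0:ℝ) T ∧ ∃ α ∈ Icc (0:ℝ) 1, p.1 = α • lLim x p.2 + (1 - α) • x p.2 }

/-- The order on the completed graph of `x`. -/
def graphOrder {ι : Type*} [Fintype ι] (x : ℝ → EuclideanSpace ℝ ι)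
    (p q : EuclideanSpace ℝ ι × ℝ) : Prop :=
  p.2 < q.2 ∨ (p.2 = q.2 ∧ ∀ i : ι, |lLim x p.2 i - p.1 i| ≤ |lLim x p.2 i - q.1 i|)

/-- `(u, r)` is a parametric representation of the càdlàg path `x` on `[0,T]`:
a continuous, surjective, order-nondecreasing map from `[0,1]` onto the completed graph. -/
def IsParamRep {ι : Type*} [Fintype ι] (x : ℝ → EuclideanSpace ℝ ι) (T : ℝ)
    (u : ℝ → EuclideanSpace ℝ ι) (r : ℝ → ℝ) : Prop :=
  ContinuousOn (fun z => (u z, r z)) (Icc 0 1) ∧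
  (fun z => (u z, r z)) '' Icc 0 1 = completedGraph x T ∧
  ∀ z₁ ∈ Icc (0:ℝ) 1, ∀ z₂ ∈ Icc (0:ℝ) 1, z₁ ≤ z₂ →
    graphOrder x (u z₁, r z₁) (u z₂, r z₂)

/-- The data of a partition `0 = t₁ < ⋯ < t_{k+1} = T` underlying a classical simple
left-continuous path on `[0,T]`. -/
structure SimpleData (T : ℝ) where
  k : ℕ
  kpos : 1 ≤ k
  t : ℕ → ℝ
  t_one : t 1 = 0
  t_top : t (k + 1) = T
  t_mono : ∀ i, 1 ≤ i → i ≤ k → t i < t (i + 1)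

/-- `h` is a classical simple left-continuous path for the partition `P`, i.e.
`h = h(0)·1_{{0}} + Σ_{i=1}^{k} h(t_{i+1})·1_{(t_i, t_{i+1}]}`. -/
def SimpleData.Represents {T : ℝ} (P : SimpleData T) (h : ℝ → ℝ) : Prop :=
  ∀ i, 1 ≤ i → i ≤ P.k → ∀ s, P.t i < s → s ≤ P.t (i + 1) → h s = h (P.t (i + 1))

/-- The simple integral `∫₀^τ h(s) dz(s) = Σ_{i=1}^{k} h(t_{i+1})·(z(t_{i+1} ∧ τ) − z(t_i ∧ τ))`
of a classical simple left-continuous path `h` (with times from `P`) against `z`. -/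
noncomputable def simpleIntegral {T : ℝ} (P : SimpleData T) (h z : ℝ → ℝ) (τ : ℝ) : ℝ :=
  ∑ i ∈ Finset.Icc 1 P.k, h (P.t (i + 1)) * (z (min (P.t (i + 1)) τ) - z (min (P.t i) τ))

/-- algebra helper: if `u` is a convex combination `α L + (1-α) V` and `|L - V| ≤ |L - u|`,
then `u = V`. -/
lemma stmt0_aux1 {α L V ui : ℝ} (hα : α ∈ Icc (0:ℝ) 1) (he : ui = α*L + (1-α)*V)
    (hle : |L - V| ≤ |L - ui|) : ui = V := by
  have h3 : |L - ui| = (1-α) * |L - V| := by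
    rw [show L - ui = (1-α)*(L-V) by rw [he]; ring, abs_mul,
      abs_of_nonneg (by linarith [hα.2])]
  have h4 : α * |L - V| = 0 := by nlinarith [abs_nonneg (L-V), hα.1]
  have h6 : |ui - V| = α * |L - V| := by
    rw [show ui - V = α * (L-V) by rw [he]; ring, abs_mul, abs_of_nonneg hα.1]
  have := abs_eq_zero.1 (h6.trans h4)
  linarith

/-- given a parametric representation `((u¹,u²), r)` of the pair `(x,y)`, where
`x(·−)` is a classical simple left-continuous path, the triple `((u¹, u², ũ), r)` built from
the explicit formula `ũ` is a parametric representation of `(x, y, ∫₀^· x(s−) dy(s))`. -/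
theorem stmt0 (T : ℝ) (hT : 0 < T) (x y : ℝ → ℝ)
    (hx : CadlagOn x T) (hy : CadlagOn y T)
    (P : SimpleData T) (hP : P.Represents (fun s => lLim x s))
    (u1 u2 r : ℝ → ℝ)
    (hpar : IsParamRep (fun t => (WithLp.toLp 2 ![x t, y t] : EuclideanSpace ℝ (Fin 2))) T
      (fun z => (WithLp.toLp 2 ![u1 z, u2 z] : EuclideanSpace ℝ (Fin 2))) r)
    (zbar zlow : ℕ → ℝ)
    (hzbar : ∀ i, zbar i = sSup {z | z ∈ Icc (0:ℝ) 1 ∧ r z = P.t i})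
    (hzlow : ∀ i, zlow i = sInf {z | z ∈ Icc (0:ℝ) 1 ∧ r z = P.t i})
    (ut : ℝ → ℝ)
    (hut : ∀ z, ut z = ∑ i ∈ Finset.Icc 1 P.k,
      u1 (zlow (i + 1)) * (u2 (min z (zbar (i + 1))) - u2 (min z (zbar i)))) :
    IsParamRep
      (fun t => (WithLp.toLp 2 ![x t, y t, simpleIntegral P (fun s => lLim x s) y t] :
        EuclideanSpace ℝ (Fin 3)))
      T (fun z => (WithLp.toLp 2 ![u1 z, u2 z, ut z] : EuclideanSpace ℝ (Fin 3))) r := by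
  classical
  obtain ⟨hcont, himg, hord⟩ := hpar
  set f : ℝ → ℝ := fun τ => simpleIntegral P (fun s => lLim x s) y τ with hf
  -- partition facts
  have htmono : ∀ i j, 1 ≤ i → i ≤ j → j ≤ P.k + 1 → P.t i ≤ P.t j := by
    intro i j h1 hij hjk
    induction j with
    | zero => omega
    | succ j ih =>
      rcases Nat.lt_or_ge i (j+1) with h | h
      · have hj1 : 1 ≤ j := by omega
        have h2 := P.t_mono j hj1 (by omega)
        have h3 := ih (by omega) (by omega)
        linarith
      · have hi : i = j + 1 := by omega
        rw [hi]
  have htlt : ∀ i j, 1 ≤ i → i < j → j ≤ P.k + 1 → P.t i < P.t j := by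
    intro i j h1 hij hjk
    have h2 := P.t_mono i h1 (by omega)
    have h3 := htmono (i+1) j (by omega) (by omega) hjk
    linarith
  have ht0 : ∀ j, 1 ≤ j → j ≤ P.k + 1 → P.t j ∈ Icc (0:ℝ) T := by
    intro j h1 h2
    constructor
    · have h3 := htmono 1 j le_rfl h1 h2
      rw [P.t_one] at h3; exact h3
    · have h3 := htmono j (P.k+1) h1 h2 le_rfl
      rw [P.t_top] at h3; exact h3
  -- membership of parametrization points in the completed graph of the pair
  have hrmem : ∀ z ∈ Icc (0:ℝ) 1,
      ((WithLp.toLp 2 ![u1 z, u2 z] : EuclideanSpace ℝ (Fin 2)), r z) ∈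
        completedGraph (fun t => (WithLp.toLp 2 ![x t, y t] : EuclideanSpace ℝ (Fin 2))) T := by
    intro z hz
    rw [← himg]
    exact mem_image_of_mem _ hz
  have hrIcc : ∀ z ∈ Icc (0:ℝ) 1, r z ∈ Icc (0:ℝ) T := fun z hz => (hrmem z hz).1
  have hrmono : ∀ z₁ ∈ Icc (0:ℝ) 1, ∀ z₂ ∈ Icc (0:ℝ) 1, z₁ ≤ z₂ → r z₁ ≤ r z₂ := by
    intro z₁ h₁ z₂ h₂ hle
    rcases hord z₁ h₁ z₂ h₂ hle with h | h
    · exact le_of_lt h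
    · exact le_of_eq h.1
  -- componentwise left limits of the pair
  have hL2 : ∀ t ∈ Icc (0:ℝ) T,
      lLim (fun τ => (WithLp.toLp 2 ![x τ, y τ] : EuclideanSpace ℝ (Fin 2))) t
        = (WithLp.toLp 2 ![lLim x t, lLim y t] : EuclideanSpace ℝ (Fin 2)) := by
    intro t ht
    by_cases h0 : 0 < t
    · have hxl := hx.2 t ⟨h0, ht.2⟩
      have hyl := hy.2 t ⟨h0, ht.2⟩
      have htd : Tendsto (fun τ => (WithLp.toLp 2 ![x τ, y τ] : EuclideanSpace ℝ (Fin 2)))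
          (𝓝[Iio t] t) (𝓝 (WithLp.toLp 2 ![lLim x t, lLim y t] : EuclideanSpace ℝ (Fin 2))) := by
        refine ((PiLp.continuous_toLp 2 _).tendsto _).comp (f := fun τ => ![x τ, y τ]) ?_
        apply tendsto_pi_nhds.2
        intro i
        fin_cases i
        · simpa using hxl
        · simpa using hyl
      simp only [lLim, if_pos h0] at htd ⊢
      exact htd.limUnder_eq
    · simp [lLim, h0]
  -- surjectivity onto times with prescribed interpolation parameter
  have hsurj : ∀ t ∈ Icc (0:ℝ) T, ∀ α ∈ Icc (0:ℝ) 1, ∃ z ∈ Icc (0:ℝ) 1,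
      r z = t ∧ u1 z = α * lLim x t + (1-α) * x t ∧ u2 z = α * lLim y t + (1-α) * y t := by
    intro t ht α hα
    have hmem : ((α • lLim (fun τ => (WithLp.toLp 2 ![x τ, y τ] : EuclideanSpace ℝ (Fin 2))) t
        + (1-α) • (WithLp.toLp 2 ![x t, y t] : EuclideanSpace ℝ (Fin 2))), t) ∈
        completedGraph (fun t => (WithLp.toLp 2 ![x t, y t] : EuclideanSpace ℝ (Fin 2))) T :=
      ⟨ht, α, hα, rfl⟩
    rw [← himg] at hmem
    obtain ⟨z, hz, hzeq⟩ := hmem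
    have h2 : r z = t := congrArg Prod.snd hzeq
    have h1 : (WithLp.toLp 2 ![u1 z, u2 z] : EuclideanSpace ℝ (Fin 2))
        = α • lLim (fun τ => (WithLp.toLp 2 ![x τ, y τ] : EuclideanSpace ℝ (Fin 2))) t
          + (1-α) • (WithLp.toLp 2 ![x t, y t] : EuclideanSpace ℝ (Fin 2)) := congrArg Prod.fst hzeq
    rw [hL2 t ht] at h1
    refine ⟨z, hz, h2, ?_, ?_⟩
    · have := congrArg (fun v : EuclideanSpace ℝ (Fin 2) => v 0) h1
      simpa [PiLp.add_apply, PiLp.smul_apply] using this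
    · have := congrArg (fun v : EuclideanSpace ℝ (Fin 2) => v 1) h1
      simpa [PiLp.add_apply, PiLp.smul_apply] using this
  -- level-set facts for r
  have hrc : ContinuousOn r (Icc 0 1) := continuous_snd.comp_continuousOn hcont
  have hSfacts : ∀ j, 1 ≤ j → j ≤ P.k + 1 →
      (zbar j ∈ Icc (0:ℝ) 1 ∧ r (zbar j) = P.t j) ∧
      (zlow j ∈ Icc (0:ℝ) 1 ∧ r (zlow j) = P.t j) ∧
      (∀ z ∈ Icc (0:ℝ) 1, r z = P.t j → zlow j ≤ z ∧ z ≤ zbar j) := by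
    intro j h1 h2
    have hSeq : {z | z ∈ Icc (0:ℝ) 1 ∧ r z = P.t j} = Icc 0 1 ∩ r ⁻¹' {P.t j} := by
      ext z; simp only [mem_setOf_eq, mem_inter_iff, mem_preimage, mem_singleton_iff]
    have hclosed : IsClosed {z | z ∈ Icc (0:ℝ) 1 ∧ r z = P.t j} := by
      rw [hSeq]
      exact hrc.preimage_isClosed_of_isClosed isClosed_Icc isClosed_singleton
    have hne : {z | z ∈ Icc (0:ℝ) 1 ∧ r z = P.t j}.Nonempty := by
      obtain ⟨z, hz, hrz, -⟩ := hsurj (P.t j) (ht0 j h1 h2) 0 ⟨le_rfl, zero_le_one⟩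
      exact ⟨z, hz, hrz⟩
    have hbdda : BddAbove {z | z ∈ Icc (0:ℝ) 1 ∧ r z = P.t j} :=
      ⟨1, fun z hz => hz.1.2⟩
    have hbddb : BddBelow {z | z ∈ Icc (0:ℝ) 1 ∧ r z = P.t j} :=
      ⟨0, fun z hz => hz.1.1⟩
    have hsup : zbar j ∈ {z | z ∈ Icc (0:ℝ) 1 ∧ r z = P.t j} := by
      rw [hzbar]; exact hclosed.csSup_mem hne hbdda
    have hinf : zlow j ∈ {z | z ∈ Icc (0:ℝ) 1 ∧ r z = P.t j} := by
      rw [hzlow]; exact hclosed.csInf_mem hne hbddb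
    refine ⟨⟨hsup.1, hsup.2⟩, ⟨hinf.1, hinf.2⟩, ?_⟩
    intro z hz hrz
    constructor
    · rw [hzlow]; exact csInf_le hbddb ⟨hz, hrz⟩
    · rw [hzbar]; exact le_csSup hbdda ⟨hz, hrz⟩
  have hH4 : ∀ j, 1 ≤ j → j ≤ P.k + 1 → ∀ z ∈ Icc (0:ℝ) 1, r z ≤ P.t j → z ≤ zbar j := by
    intro j h1 h2 z hz hrz
    by_contra hcon
    push_neg at hcon
    obtain ⟨⟨hbmem, hbr⟩, -, hbetween⟩ := hSfacts j h1 h2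
    have h3 : P.t j ≤ r z := by
      rw [← hbr]; exact hrmono (zbar j) hbmem z hz (le_of_lt hcon)
    have h4 : r z = P.t j := le_antisymm hrz h3
    exact absurd ((hbetween z hz h4).2) (not_le.2 hcon)
  have hH3 : ∀ j, 1 ≤ j → j ≤ P.k + 1 → ∀ z ∈ Icc (0:ℝ) 1, P.t j < r z → zbar j < z := by
    intro j h1 h2 z hz hrz
    by_contra hcon
    push_neg at hcon
    obtain ⟨⟨hbmem, hbr⟩, -, -⟩ := hSfacts j h1 h2
    have : r z ≤ P.t j := by rw [← hbr]; exact hrmono z hz (zbar j) hbmem hcon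
    exact absurd hrz (not_lt.2 this)
  -- values of u at the endpoints of level sets
  have hval_bar : ∀ j, 1 ≤ j → j ≤ P.k + 1 →
      u1 (zbar j) = x (P.t j) ∧ u2 (zbar j) = y (P.t j) := by
    intro j h1 h2
    obtain ⟨z, hz, hrz, hu1, hu2⟩ := hsurj (P.t j) (ht0 j h1 h2) 0 ⟨le_rfl, zero_le_one⟩
    simp only [zero_mul, sub_zero, one_mul, zero_add] at hu1 hu2
    obtain ⟨⟨hbmem, hbr⟩, -, hbetween⟩ := hSfacts j h1 h2
    have hzle : z ≤ zbar j := (hbetween z hz hrz).2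
    rcases hord z hz (zbar j) hbmem hzle with hcase | ⟨-, hcomp⟩
    · rw [hrz, hbr] at hcase; exact absurd hcase (lt_irrefl _)
    · obtain ⟨-, α, hα, hveq⟩ := hrmem (zbar j) hbmem
      rw [hbr, hL2 (P.t j) (ht0 j h1 h2)] at hveq
      have he1 : u1 (zbar j) = α * lLim x (P.t j) + (1-α) * x (P.t j) := by
        have := congrArg (fun v : EuclideanSpace ℝ (Fin 2) => v 0) hveq
        simpa [PiLp.add_apply, PiLp.smul_apply] using this
      have he2 : u2 (zbar j) = α * lLim y (P.t j) + (1-α) * y (P.t j) := by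
        have := congrArg (fun v : EuclideanSpace ℝ (Fin 2) => v 1) hveq
        simpa [PiLp.add_apply, PiLp.smul_apply] using this
      have hc0 := hcomp 0
      have hc1 := hcomp 1
      rw [hrz, hL2 (P.t j) (ht0 j h1 h2)] at hc0 hc1
      simp only [Matrix.cons_val_zero, Matrix.cons_val_one, Matrix.head_cons] at hc0 hc1
      rw [hu1] at hc0
      rw [hu2] at hc1
      exact ⟨stmt0_aux1 hα he1 hc0, stmt0_aux1 hα he2 hc1⟩
  have hval_low : ∀ j, 1 ≤ j → j ≤ P.k + 1 →
      u1 (zlow j) = lLim x (P.t j) ∧ u2 (zlow j) = lLim y (P.t j) := by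
    intro j h1 h2
    obtain ⟨z, hz, hrz, hu1, hu2⟩ := hsurj (P.t j) (ht0 j h1 h2) 1 ⟨zero_le_one, le_rfl⟩
    simp only [one_mul, sub_self, zero_mul, add_zero] at hu1 hu2
    obtain ⟨-, ⟨hlmem, hlr⟩, hbetween⟩ := hSfacts j h1 h2
    have hzle : zlow j ≤ z := (hbetween z hz hrz).1
    rcases hord (zlow j) hlmem z hz hzle with hcase | ⟨-, hcomp⟩
    · rw [hrz, hlr] at hcase; exact absurd hcase (lt_irrefl _)
    · have hc0 := hcomp 0
      have hc1 := hcomp 1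
      rw [hlr, hL2 (P.t j) (ht0 j h1 h2)] at hc0 hc1
      simp only [Matrix.cons_val_zero, Matrix.cons_val_one, Matrix.head_cons] at hc0 hc1
      rw [hu1, sub_self, abs_zero] at hc0
      rw [hu2, sub_self, abs_zero] at hc1
      have h01 := abs_nonneg (lLim x (P.t j) - u1 (zlow j))
      have h02 := abs_nonneg (lLim y (P.t j) - u2 (zlow j))
      constructor
      · have : |lLim x (P.t j) - u1 (zlow j)| = 0 := le_antisymm hc0 h01
        have := abs_eq_zero.1 this
        linarith
      · have : |lLim y (P.t j) - u2 (zlow j)| = 0 := le_antisymm hc1 h02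
        have := abs_eq_zero.1 this
        linarith
  -- the master lemma
  have hML : ∀ t ∈ Icc (0:ℝ) T, ∃ hstar : ℝ,
      (∀ z ∈ Icc (0:ℝ) 1, r z = t → ut z = f t + hstar * (u2 z - y t)) ∧
      lLim f t = f t + hstar * (lLim y t - y t) ∧
      (0 < t → Tendsto f (𝓝[Iio t] t) (𝓝 (lLim f t))) := by
    intro t ht
    by_cases h0 : 0 < t
    · -- locate t in the partition
      set Q : ℕ → Prop := fun i => P.t i < t with hQ
      have hQ1 : Q 1 := by rw [hQ]; simp only [P.t_one]; exact h0
      set istar := Nat.findGreatest Q P.k with histar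
      have h1le : 1 ≤ istar := Nat.le_findGreatest P.kpos hQ1
      have hik : istar ≤ P.k := Nat.findGreatest_le P.k
      have hlt : P.t istar < t := Nat.findGreatest_spec P.kpos hQ1
      have hge : t ≤ P.t (istar + 1) := by
        rcases Nat.lt_or_ge istar P.k with h | h
        · by_contra hcon
          push_neg at hcon
          exact Nat.findGreatest_is_greatest (Nat.lt_succ_self istar) (by omega) hcon
        · have : istar = P.k := le_antisymm hik h
          rw [this, P.t_top]; exact ht.2
      -- left limit of f
      have hyL : Tendsto y (𝓝[Iio t] t) (𝓝 (lLim y t)) := hy.2 t ⟨h0, ht.2⟩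
      have hev : ∀ᶠ s in 𝓝[Iio t] t,
          f s = f t + lLim x (P.t (istar + 1)) * (y s - y t) := by
        filter_upwards [Ioo_mem_nhdsLT_of_mem (show t ∈ Ioc (P.t istar) t from ⟨hlt, le_rfl⟩)] with s hs
        have key2 : f s - f t = lLim x (P.t (istar + 1)) * (y s - y t) := by
          rw [hf]
          simp only [simpleIntegral]
          rw [← Finset.sum_sub_distrib]
          refine Eq.trans (Finset.sum_eq_single_of_mem istar (Finset.mem_Icc.2 ⟨h1le, hik⟩) ?_) ?_
          · intro i hi hne
            obtain ⟨hi1, hi2⟩ := Finset.mem_Icc.1 hi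
            rcases Nat.lt_or_gt_of_ne hne with hcase | hcase
            · have ha1 : P.t (i+1) < t := by
                rcases Nat.lt_or_ge (i+1) istar with hc | hc
                · exact lt_trans (htlt (i+1) istar (by omega) hc (by omega)) hlt
                · have hii : i + 1 = istar := by omega
                  rw [hii]; exact hlt
              have ha1s : P.t (i+1) ≤ s := by
                rcases Nat.lt_or_ge (i+1) istar with hc | hc
                · exact le_trans (htlt (i+1) istar (by omega) hc (by omega)).le hs.1.le
                · have hii : i + 1 = istar := by omega
                  rw [hii]; exact hs.1.le
              have ha0 : P.t i < t := lt_trans (P.t_mono i hi1 hi2) ha1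
              have ha0s : P.t i ≤ s := le_trans (P.t_mono i hi1 hi2).le ha1s
              rw [min_eq_left ha1s, min_eq_left ha0s, min_eq_left ha1.le, min_eq_left ha0.le]
              ring
            · have ha0 : t ≤ P.t i := by
                rcases Nat.lt_or_ge (istar+1) i with hc | hc
                · exact le_trans hge (htmono (istar+1) i (by omega) (by omega) (by omega))
                · have hii : i = istar + 1 := by omega
                  rw [hii]; exact hge
              have ha1 : t ≤ P.t (i+1) := le_trans ha0 (P.t_mono i hi1 hi2).le
              have ha0s : s ≤ P.t i := le_trans hs.2.le ha0
              have ha1s : s ≤ P.t (i+1) := le_trans hs.2.le ha1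
              rw [min_eq_right ha1s, min_eq_right ha0s, min_eq_right ha1, min_eq_right ha0]
              ring
          · have h1s : s ≤ P.t (istar+1) := le_trans hs.2.le hge
            rw [min_eq_right h1s, min_eq_left hs.1.le, min_eq_right hge, min_eq_left hlt.le]
            ring
        linarith [key2]
      have htd : Tendsto (fun s => f t + lLim x (P.t (istar + 1)) * (y s - y t))
          (𝓝[Iio t] t) (𝓝 (f t + lLim x (P.t (istar + 1)) * (lLim y t - y t))) :=
        tendsto_const_nhds.add ((tendsto_const_nhds.mul (hyL.sub tendsto_const_nhds)))
      have htf : Tendsto f (𝓝[Iio t] t)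
          (𝓝 (f t + lLim x (P.t (istar + 1)) * (lLim y t - y t))) :=
        Tendsto.congr' (Filter.EventuallyEq.symm hev) htd
      have hlfval : lLim f t = f t + lLim x (P.t (istar + 1)) * (lLim y t - y t) := by
        have hlf2 : lLim f t = limUnder (𝓝[Iio t] t) f := by
          simp only [lLim, if_pos h0]
        rw [hlf2, htf.limUnder_eq]
      refine ⟨lLim x (P.t (istar + 1)), ?_, hlfval, fun _ => by rw [hlfval]; exact htf⟩
      · -- part (a)
        intro z hz hrz
        have key : ut z - f t = lLim x (P.t (istar + 1)) * (u2 z - y t) := by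
          rw [hut z, hf]
          simp only [simpleIntegral]
          rw [← Finset.sum_sub_distrib]
          refine Eq.trans (Finset.sum_eq_single_of_mem istar (Finset.mem_Icc.2 ⟨h1le, hik⟩) ?_) ?_
          · intro i hi hne
            obtain ⟨hi1, hi2⟩ := Finset.mem_Icc.1 hi
            rcases Nat.lt_or_gt_of_ne hne with hcase | hcase
            · -- i < istar
              have ha1 : P.t (i+1) < t := by
                rcases Nat.lt_or_ge (i+1) istar with hc | hc
                · exact lt_trans (htlt (i+1) istar (by omega) hc (by omega)) hlt
                · have : i + 1 = istar := by omega
                  rw [this]; exact hlt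
              have ha0 : P.t i < t := lt_trans (P.t_mono i hi1 hi2) ha1
              have hb1 : zbar (i+1) < z := hH3 (i+1) (by omega) (by omega) z hz (by rw [hrz]; exact ha1)
              have hb0 : zbar i < z := hH3 i (by omega) (by omega) z hz (by rw [hrz]; exact ha0)
              rw [min_eq_right hb1.le, min_eq_right hb0.le,
                (hval_bar (i+1) (by omega) (by omega)).2, (hval_bar i (by omega) (by omega)).2,
                (hval_low (i+1) (by omega) (by omega)).1,
                min_eq_left ha1.le, min_eq_left ha0.le]
              ring
            · -- istar < i
              have ha0 : t ≤ P.t i := by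
                rcases Nat.lt_or_ge (istar+1) i with hc | hc
                · exact le_trans hge (htmono (istar+1) i (by omega) (by omega) (by omega))
                · have hii : i = istar + 1 := by omega
                  rw [hii]; exact hge
              have ha1 : t ≤ P.t (i+1) := le_trans ha0 (P.t_mono i hi1 hi2).le
              have hb1 : z ≤ zbar (i+1) := hH4 (i+1) (by omega) (by omega) z hz (by rw [hrz]; exact ha1)
              have hb0 : z ≤ zbar i := hH4 i (by omega) (by omega) z hz (by rw [hrz]; exact ha0)
              rw [min_eq_left hb1, min_eq_left hb0, min_eq_right ha1, min_eq_right ha0]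
              ring
          · -- the istar term
            have hb1 : z ≤ zbar (istar+1) := hH4 (istar+1) (by omega) (by omega) z hz (by rw [hrz]; exact hge)
            have hb0 : zbar istar < z := hH3 istar (by omega) (by omega) z hz (by rw [hrz]; exact hlt)
            rw [min_eq_left hb1, min_eq_right hb0.le,
              (hval_bar istar (by omega) (by omega)).2,
              (hval_low (istar+1) (by omega) (by omega)).1,
              min_eq_right hge, min_eq_left hlt.le]
            ring
        linarith [key]
    · -- t = 0
      have ht0' : t = 0 := le_antisymm (not_lt.1 h0) ht.1
      refine ⟨0, ?_, ?_, ?_⟩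
      · intro z hz hrz
        rw [hut z, hf]
        simp only [simpleIntegral, zero_mul, add_zero]
        rw [Finset.sum_eq_zero, Finset.sum_eq_zero]
        · intro i hi
          obtain ⟨hi1, hi2⟩ := Finset.mem_Icc.1 hi
          have h1 : min (P.t (i+1)) t = t := min_eq_right (by rw [ht0']; exact (ht0 (i+1) (by omega) (by omega)).1)
          have h2 : min (P.t i) t = t := min_eq_right (by rw [ht0']; exact (ht0 i (by omega) (by omega)).1)
          rw [h1, h2, sub_self, mul_zero]
        · intro i hi
          obtain ⟨hi1, hi2⟩ := Finset.mem_Icc.1 hi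
          have h1 : z ≤ zbar (i+1) := hH4 (i+1) (by omega) (by omega) z hz
            (by rw [hrz, ht0']; exact (ht0 (i+1) (by omega) (by omega)).1)
          have h2 : z ≤ zbar i := hH4 i (by omega) (by omega) z hz
            (by rw [hrz, ht0']; exact (ht0 i (by omega) (by omega)).1)
          rw [min_eq_left h1, min_eq_left h2, sub_self, mul_zero]
      · rw [ht0']
        simp [lLim]
      · intro hcon; exact absurd hcon h0
  -- componentwise left limits of the triple
  have hL3 : ∀ t ∈ Icc (0:ℝ) T,
      lLim (fun τ => (WithLp.toLp 2 ![x τ, y τ, f τ] : EuclideanSpace ℝ (Fin 3))) t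
        = (WithLp.toLp 2 ![lLim x t, lLim y t, lLim f t] : EuclideanSpace ℝ (Fin 3)) := by
    intro t ht
    by_cases h0 : 0 < t
    · have hxl := hx.2 t ⟨h0, ht.2⟩
      have hyl := hy.2 t ⟨h0, ht.2⟩
      obtain ⟨hstar, -, -, hfl'⟩ := hML t ht
      have hfl := hfl' h0
      have htd : Tendsto (fun τ => (WithLp.toLp 2 ![x τ, y τ, f τ] : EuclideanSpace ℝ (Fin 3)))
          (𝓝[Iio t] t) (𝓝 (WithLp.toLp 2 ![lLim x t, lLim y t, lLim f t] : EuclideanSpace ℝ (Fin 3))) := by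
        refine ((PiLp.continuous_toLp 2 _).tendsto _).comp (f := fun τ => ![x τ, y τ, f τ]) ?_
        apply tendsto_pi_nhds.2
        intro i
        fin_cases i
        · simpa using hxl
        · simpa using hyl
        · simpa using hfl
      simp only [lLim, if_pos h0] at htd ⊢
      exact htd.limUnder_eq
    · simp [lLim, h0]
  -- continuity facts
  have hu1c : ContinuousOn u1 (Icc 0 1) := by
    have := ((PiLp.continuous_apply 2 _ (0 : Fin 2)).comp continuous_fst).comp_continuousOn hcont
    simpa [Function.comp_def] using this
  have hu2c : ContinuousOn u2 (Icc 0 1) := by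
    have := ((PiLp.continuous_apply 2 _ (1 : Fin 2)).comp continuous_fst).comp_continuousOn hcont
    simpa [Function.comp_def] using this
  have hutc : ContinuousOn ut (Icc 0 1) := by
    have hcomp : ∀ j, 1 ≤ j → j ≤ P.k + 1 →
        ContinuousOn (fun z => u2 (min z (zbar j))) (Icc 0 1) := by
      intro j hj1 hj2
      have hbmem := ((hSfacts j hj1 hj2).1).1
      apply hu2c.comp ((continuous_id.min continuous_const).continuousOn)
      intro z hz
      exact ⟨le_min hz.1 hbmem.1, min_le_of_left_le hz.2⟩
    have hsum : ContinuousOn (fun z => ∑ i ∈ Finset.Icc 1 P.k,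
        u1 (zlow (i + 1)) * (u2 (min z (zbar (i + 1))) - u2 (min z (zbar i)))) (Icc 0 1) := by
      apply continuousOn_finset_sum
      intro i hi
      obtain ⟨hi1, hi2⟩ := Finset.mem_Icc.1 hi
      exact continuousOn_const.mul
        ((hcomp (i+1) (by omega) (by omega)).sub (hcomp i (by omega) (by omega)))
    exact hsum.congr (fun z hz => hut z)
  refine ⟨?_, ?_, ?_⟩
  · -- continuity of the triple
    apply ContinuousOn.prodMk _ hrc
    apply (PiLp.continuous_toLp 2 _).comp_continuousOn (f := fun z => ![u1 z, u2 z, ut z])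
    apply continuousOn_pi.2
    intro i
    fin_cases i
    · simpa using hu1c
    · simpa using hu2c
    · simpa using hutc
  · -- image equality
    apply subset_antisymm
    · rintro p ⟨z, hz, rfl⟩
      have htI := hrIcc z hz
      obtain ⟨-, α, hα, hveq⟩ := hrmem z hz
      rw [hL2 (r z) htI] at hveq
      have he1 : u1 z = α * lLim x (r z) + (1-α) * x (r z) := by
        have := congrArg (fun v : EuclideanSpace ℝ (Fin 2) => v 0) hveq
        simpa [PiLp.add_apply, PiLp.smul_apply] using this
      have he2 : u2 z = α * lLim y (r z) + (1-α) * y (r z) := by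
        have := congrArg (fun v : EuclideanSpace ℝ (Fin 2) => v 1) hveq
        simpa [PiLp.add_apply, PiLp.smul_apply] using this
      obtain ⟨hstar, hMLa, hMLb, -⟩ := hML (r z) htI
      have he3 : ut z = α * lLim f (r z) + (1-α) * f (r z) := by
        rw [hMLa z hz rfl, hMLb, he2]; ring
      refine ⟨htI, α, hα, ?_⟩
      show (WithLp.toLp 2 ![u1 z, u2 z, ut z] : EuclideanSpace ℝ (Fin 3)) = _
      rw [hL3 (r z) htI]
      ext i
      fin_cases i
      · simpa [PiLp.add_apply, PiLp.smul_apply] using he1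
      · simpa [PiLp.add_apply, PiLp.smul_apply] using he2
      · simpa [PiLp.add_apply, PiLp.smul_apply] using he3
    · rintro ⟨v, t⟩ ⟨ht, α, hα, hveq⟩
      have hq : ((α • lLim (fun τ => (WithLp.toLp 2 ![x τ, y τ] : EuclideanSpace ℝ (Fin 2))) t
          + (1-α) • (WithLp.toLp 2 ![x t, y t] : EuclideanSpace ℝ (Fin 2))), t) ∈
          completedGraph (fun t => (WithLp.toLp 2 ![x t, y t] : EuclideanSpace ℝ (Fin 2))) T :=
        ⟨ht, α, hα, rfl⟩
      rw [← himg] at hq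
      obtain ⟨z, hz, hzeq⟩ := hq
      have h2 : r z = t := congrArg Prod.snd hzeq
      have h1 : (WithLp.toLp 2 ![u1 z, u2 z] : EuclideanSpace ℝ (Fin 2))
          = α • lLim (fun τ => (WithLp.toLp 2 ![x τ, y τ] : EuclideanSpace ℝ (Fin 2))) t
            + (1-α) • (WithLp.toLp 2 ![x t, y t] : EuclideanSpace ℝ (Fin 2)) := congrArg Prod.fst hzeq
      rw [hL2 t ht] at h1
      have he1 : u1 z = α * lLim x t + (1-α) * x t := by
        have := congrArg (fun v : EuclideanSpace ℝ (Fin 2) => v 0) h1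
        simpa [PiLp.add_apply, PiLp.smul_apply] using this
      have he2 : u2 z = α * lLim y t + (1-α) * y t := by
        have := congrArg (fun v : EuclideanSpace ℝ (Fin 2) => v 1) h1
        simpa [PiLp.add_apply, PiLp.smul_apply] using this
      obtain ⟨hstar, hMLa, hMLb, -⟩ := hML t ht
      have he3 : ut z = α * lLim f t + (1-α) * f t := by
        rw [hMLa z hz h2, hMLb, he2]; ring
      have hveq' : v = (WithLp.toLp 2 ![α * lLim x t + (1-α) * x t, α * lLim y t + (1-α) * y t,
          α * lLim f t + (1-α) * f t] : EuclideanSpace ℝ (Fin 3)) := by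
        rw [show v = α • lLim (fun τ => (WithLp.toLp 2 ![x τ, y τ, f τ] : EuclideanSpace ℝ (Fin 3))) t
            + (1-α) • (WithLp.toLp 2 ![x t, y t, f t] : EuclideanSpace ℝ (Fin 3)) from hveq, hL3 t ht]
        ext i
        fin_cases i
        · simp [PiLp.add_apply, PiLp.smul_apply]
        · simp [PiLp.add_apply, PiLp.smul_apply]
        · simp [PiLp.add_apply, PiLp.smul_apply]
      refine ⟨z, hz, ?_⟩
      rw [Prod.mk.injEq]
      refine ⟨?_, h2⟩
      rw [hveq']
      ext i
      fin_cases i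
      · simpa using he1
      · simpa using he2
      · simpa using he3
  · -- order
    intro z₁ hz₁ z₂ hz₂ hle
    rcases hord z₁ hz₁ z₂ hz₂ hle with hcase | ⟨heq, hcomp⟩
    · exact Or.inl hcase
    · refine Or.inr ⟨heq, ?_⟩
      have htI := hrIcc z₁ hz₁
      intro i
      have hc0 := hcomp 0
      have hc1 := hcomp 1
      rw [hL2 (r z₁) htI] at hc0 hc1
      simp only [Matrix.cons_val_zero, Matrix.cons_val_one, Matrix.head_cons] at hc0 hc1
      fin_cases i
      · show |lLim (fun τ => (WithLp.toLp 2 ![x τ, y τ, f τ] : EuclideanSpace ℝ (Fin 3))) (r z₁) 0 - _| ≤ _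
        rw [hL3 (r z₁) htI]
        simpa using hc0
      · rw [hL3 (r z₁) htI]
        simpa using hc1
      · rw [hL3 (r z₁) htI]
        obtain ⟨hstar, hMLa, hMLb, -⟩ := hML (r z₁) htI
        have e₁ : lLim f (r z₁) - ut z₁ = hstar * (lLim y (r z₁) - u2 z₁) := by
          rw [hMLa z₁ hz₁ rfl, hMLb]; ring
        have e₂ : lLim f (r z₁) - ut z₂ = hstar * (lLim y (r z₁) - u2 z₂) := by
          rw [hMLa z₂ hz₂ heq.symm, hMLb]; ring
        have goal2 : |lLim f (r z₁) - ut z₁| ≤ |lLim f (r z₁) - ut z₂| := by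
          rw [e₁, e₂, abs_mul, abs_mul]
          exact mul_le_mul_of_nonneg_left hc1 (abs_nonneg _)
        simpa using goal2
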